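/- Let X be a reflexive, strictly convex Banach space satisfying the uniform Kadec–Klee property (UKK). Then for any nonempty convex subsets A, B ⊆ X, the pair (A,B) has property WUC. -/

import Mathlib

open Filter Metric

/-- The distance between two sets: `inf {d(x,y) : x ∈ A, y ∈ B}`. -/
noncomputable def setDist {X : Type*} [PseudoMetricSpace X] (A B : Set X) : ℝ :=
  sInf (Set.image2 dist A B)

/-- Property WUC for a pair of subsets of a metric space. -/
def PropWUC {X : Type*} [MetricSpace X] (A B : Set X) : Prop :=
  ∀ x : ℕ → X, (∀ n, x n ∈ A) →
    (∀ ε > (0 : ℝ), ∃ y ∈ B, ∃ m₀ : ℕ, ∀ m ≥ m₀, dist (x m) y ≤ setDist A B + ε) →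
    ∃ z, Tendsto x atTop (nhds z)

/-- The sequence `x` converges weakly to `z`. -/
def WeakTendsto {X : Type*} [NormedAddCommGroup X] [NormedSpace ℝ X]
    (x : ℕ → X) (z : X) : Prop :=
  ∀ f : X →L[ℝ] ℝ, Tendsto (fun n => f (x n)) atTop (nhds (f z))

/-- `X` is reflexive: the canonical embedding into the double dual is surjective. -/
def ReflexiveSpace (X : Type*) [NormedAddCommGroup X] [NormedSpace ℝ X] : Prop :=
  Function.Surjective (NormedSpace.inclusionInDoubleDual ℝ X)

/-- `X` has the uniform Kadec-Klee property: for every `ε > 0` there is `η > 0` such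
that every weak limit `z` of a sequence in the closed unit ball staying at distance at
least `ε` from `z` satisfies `‖z‖ ≤ 1 - η`. -/
def UKKProperty (X : Type*) [NormedAddCommGroup X] [NormedSpace ℝ X] : Prop :=
  ∀ ε > (0 : ℝ), ∃ η > (0 : ℝ), ∀ (x : ℕ → X) (z : X),
    (∀ n, ‖x n‖ ≤ 1) → (∀ n, ε ≤ ‖x n - z‖) → WeakTendsto x z → ‖z‖ ≤ 1 - η

section Aux

variable {X : Type*} [NormedAddCommGroup X] [NormedSpace ℝ X]

lemma WeakTendsto.comp_strictMono {v : ℕ → X} {z : X} (h : WeakTendsto v z)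
    {p : ℕ → ℕ} (hp : StrictMono p) : WeakTendsto (fun n => v (p n)) z :=
  fun f => (h f).comp hp.tendsto_atTop

lemma WeakTendsto.shift {v : ℕ → X} {z : X} (h : WeakTendsto v z) (N : ℕ) :
    WeakTendsto (fun n => v (n + N)) z :=
  fun f => (Filter.tendsto_add_atTop_iff_nat N).2 (h f)

lemma WeakTendsto.sub_const {v : ℕ → X} {z : X} (h : WeakTendsto v z) (w : X) :
    WeakTendsto (fun n => v n - w) (z - w) := by
  intro f
  simp only [map_sub]
  exact (h f).sub tendsto_const_nhds

lemma WeakTendsto.const_sub {v : ℕ → X} {z : X} (h : WeakTendsto v z) (w : X) :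
    WeakTendsto (fun n => w - v n) (w - z) := by
  intro f
  simp only [map_sub]
  exact tendsto_const_nhds.sub (h f)

lemma WeakTendsto.smul {v : ℕ → X} {z : X} (h : WeakTendsto v z) (c : ℝ) :
    WeakTendsto (fun n => c • v n) (c • z) := by
  intro f
  simp only [map_smul, smul_eq_mul]
  exact (h f).const_mul c

lemma WeakTendsto.norm_le {v : ℕ → X} {z : X} (h : WeakTendsto v z) {c : ℝ}
    (hc : ∀ᶠ n in atTop, ‖v n‖ ≤ c) : ‖z‖ ≤ c := by
  have hc0 : 0 ≤ c := by
    obtain ⟨n, hn⟩ := hc.exists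
    exact (norm_nonneg _).trans hn
  refine NormedSpace.norm_le_dual_bound ℝ z hc0 (fun f => ?_)
  have h1 : ∀ᶠ n in atTop, ‖f (v n)‖ ≤ c * ‖f‖ := by
    filter_upwards [hc] with n hn
    calc ‖f (v n)‖ ≤ ‖f‖ * ‖v n‖ := f.le_opNorm _
    _ ≤ ‖f‖ * c := by
        exact mul_le_mul_of_nonneg_left hn (norm_nonneg f)
    _ = c * ‖f‖ := mul_comm _ _
  exact le_of_tendsto (h f).norm h1

/-- Mazur's lemma style: a weak limit of points of a convex set lies in its closure. -/
lemma WeakTendsto.mem_closure {v : ℕ → X} {z : X} (h : WeakTendsto v z)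
    {A : Set X} (hA : Convex ℝ A) (hv : ∀ n, v n ∈ A) : z ∈ closure A := by
  by_contra hz
  obtain ⟨f, u, hfu, huz⟩ :=
    geometric_hahn_banach_closed_point hA.closure isClosed_closure hz
  have h1 : ∀ n, f (v n) < u := fun n => hfu _ (subset_closure (hv n))
  have h2 : f z ≤ u := le_of_tendsto (h f) (Eventually.of_forall (fun n => (h1 n).le))
  exact absurd huz (not_lt.2 h2)

/-- Separation of a point from a closed subspace by a functional vanishing on it. -/
lemma exists_dual_vanishing {M : Submodule ℝ X} (hM : IsClosed (M : Set X))
    {z : X} (hz : z ∉ M) :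
    ∃ f : X →L[ℝ] ℝ, (∀ y ∈ M, f y = 0) ∧ f z ≠ 0 := by
  obtain ⟨f, u, hfu, huz⟩ :=
    geometric_hahn_banach_closed_point (M.convex) hM hz
  have hu0 : 0 < u := by simpa using hfu 0 M.zero_mem
  refine ⟨f, fun y hy => ?_, (hu0.trans huz).ne'⟩
  by_contra hfy
  rcases lt_or_gt_of_ne hfy with hneg | hpos
  · have := hfu (((u + 1) / f y) • y) (M.smul_mem _ hy)
    rw [map_smul, smul_eq_mul, div_mul_cancel₀ _ hfy] at this
    linarith
  · have := hfu (((u + 1) / f y) • y) (M.smul_mem _ hy)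
    rw [map_smul, smul_eq_mul, div_mul_cancel₀ _ hfy] at this
    linarith

end Aux

section Aux2

open TopologicalSpace NormedSpace

variable {X : Type*} [NormedAddCommGroup X] [NormedSpace ℝ X]

/-- If the dual of a normed space is separable, so is the space. -/
lemma separableSpace_of_dual_separable {Z : Type*} [NormedAddCommGroup Z] [NormedSpace ℝ Z]
    [SeparableSpace (StrongDual ℝ Z)] : SeparableSpace Z := by
  have : Nonempty (StrongDual ℝ Z) := ⟨0⟩
  set g : ℕ → StrongDual ℝ Z := denseSeq (StrongDual ℝ Z) with hgdef
  have hg : DenseRange g := denseRange_denseSeq _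
  -- for each n, choose a near-norming vector
  have hch : ∀ n : ℕ, ∃ w : Z, ‖w‖ ≤ 1 ∧ (g n ≠ 0 → ‖g n‖ / 2 < ‖g n w‖) := by
    intro n
    by_cases hn : g n = 0
    · exact ⟨0, by simp, fun h => absurd hn h⟩
    · by_contra hcon
      push_neg at hcon
      have hbound : ‖g n‖ ≤ ‖g n‖ / 2 := by
        refine (g n).opNorm_le_bound (by positivity) (fun w => ?_)
        rcases eq_or_ne w 0 with rfl | hw
        · simp
        · have h1 : ‖(‖w‖⁻¹ • w : Z)‖ ≤ 1 := by
            rw [norm_smul, norm_inv, norm_norm]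
            rw [inv_mul_cancel₀ (norm_ne_zero_iff.2 hw)]
          have h2 := (hcon (‖w‖⁻¹ • w) h1).2
          rw [map_smul, smul_eq_mul, norm_mul, norm_inv, norm_norm] at h2
          have hw0 : 0 < ‖w‖ := norm_pos_iff.2 hw
          calc ‖g n w‖ = ‖w‖ * (‖w‖⁻¹ * ‖g n w‖) := by
                field_simp
          _ ≤ ‖w‖ * (‖g n‖ / 2) := mul_le_mul_of_nonneg_left h2 hw0.le
          _ = ‖g n‖ / 2 * ‖w‖ := mul_comm _ _
      have : 0 < ‖g n‖ := norm_pos_iff.2 hn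
      linarith
  choose w hw1 hw2 using hch
  -- the closed span of the w n is everything
  have htop : (Submodule.span ℝ (Set.range w)).topologicalClosure = ⊤ := by
    by_contra hne
    obtain ⟨z, hz⟩ : ∃ z : Z, z ∉ (Submodule.span ℝ (Set.range w)).topologicalClosure := by
      by_contra hall
      push_neg at hall
      exact hne (Submodule.eq_top_iff'.2 hall)
    obtain ⟨f, hf0, hfz⟩ := exists_dual_vanishing
      (Submodule.isClosed_topologicalClosure _) hz
    have hfpos : 0 < ‖f‖ := by
      rw [norm_pos_iff]
      intro h
      exact hfz (by simp [h])
    obtain ⟨n, hn⟩ := Metric.denseRange_iff.1 hg f (‖f‖ / 3) (by positivity)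
    rw [dist_comm, dist_eq_norm] at hn
    have hgn : ‖f‖ - ‖f‖ / 3 ≤ ‖g n‖ := by
      have h2 : ‖f‖ - ‖g n‖ ≤ ‖f - g n‖ := norm_sub_norm_le f (g n)
      rw [norm_sub_rev] at h2
      linarith
    have hgn0 : g n ≠ 0 := by
      intro h
      rw [h, norm_zero] at hgn
      linarith
    have hfw : f (w n) = 0 := hf0 _
      ((Submodule.le_topologicalClosure _) (Submodule.subset_span ⟨n, rfl⟩))
    have h4 : ‖g n (w n)‖ ≤ ‖f‖ / 3 := by
      have : g n (w n) = (g n - f) (w n) := by simp [hfw]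
      rw [this]
      calc ‖(g n - f) (w n)‖ ≤ ‖g n - f‖ * ‖w n‖ := (g n - f).le_opNorm _
      _ ≤ ‖g n - f‖ * 1 := mul_le_mul_of_nonneg_left (hw1 n) (norm_nonneg _)
      _ ≤ ‖f‖ / 3 := by rw [mul_one]; exact hn.le
    have h5 := hw2 n hgn0
    have : ‖f‖ / 3 < ‖g n (w n)‖ := lt_of_le_of_lt (by linarith) h5
    linarith
  have hsep : IsSeparable ((Submodule.span ℝ (Set.range w)).topologicalClosure : Set Z) := by
    have h1 : IsSeparable (Set.range w) := (Set.countable_range w).isSeparable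
    have h2 := h1.span (R := ℝ)
    simpa [Submodule.topologicalClosure_coe] using h2.closure
  rw [htop] at hsep
  have : IsSeparable (Set.univ : Set Z) := by simpa using hsep
  exact isSeparable_univ_iff.1 this

/-- A closed subspace of a reflexive space is reflexive. -/
lemma reflexiveSpace_subspace (hrefl : ReflexiveSpace X) {Y : Submodule ℝ X}
    (hY : IsClosed (Y : Set X)) : ReflexiveSpace Y := by
  intro φ
  -- the restriction map from the dual of X to the dual of Y
  set restr : StrongDual ℝ X →L[ℝ] StrongDual ℝ Y := (ContinuousLinearMap.compL ℝ Y X ℝ).flip Y.subtypeL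
    with hrestr
  have hrestr_apply : ∀ (f : StrongDual ℝ X) (y : Y), restr f y = f y := fun f y => rfl
  obtain ⟨z, hz⟩ := hrefl (φ.comp restr)
  have hz' : ∀ f : StrongDual ℝ X, f z = φ (restr f) := by
    intro f
    have := congrArg (fun T => T f) hz
    simpa [NormedSpace.dual_def] using this
  have hzY : z ∈ Y := by
    by_contra hzn
    obtain ⟨f, hf0, hfz⟩ := exists_dual_vanishing hY hzn
    have h1 : restr f = 0 := by
      ext y
      exact (hf0 y y.2)
    have := hz' f
    rw [h1, map_zero] at this
    exact hfz this
  refine ⟨⟨z, hzY⟩, ?_⟩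
  ext g
  obtain ⟨f, hfext, -⟩ := exists_extension_norm_eq Y g
  have h1 : restr f = g := by
    ext y
    exact hfext y
  have h2 := hz' f
  rw [h1] at h2
  have h3 : f z = g ⟨z, hzY⟩ := hfext ⟨z, hzY⟩
  rw [NormedSpace.dual_def]
  rw [← h2, h3]

end Aux2

section Aux3

open TopologicalSpace NormedSpace

variable {X : Type*} [NormedAddCommGroup X] [NormedSpace ℝ X]

/-- Weak sequential compactness in a reflexive space with separable dual. -/
lemma exists_weak_subseq_aux {E : Type*} [NormedAddCommGroup E] [NormedSpace ℝ E]
    [SeparableSpace (StrongDual ℝ E)]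
    (hrefl : ReflexiveSpace E) (u : ℕ → E) (C : ℝ) (hC : 0 ≤ C) (hu : ∀ n, ‖u n‖ ≤ C) :
    ∃ φ : ℕ → ℕ, StrictMono φ ∧ ∃ z : E, ∀ g : StrongDual ℝ E,
      Tendsto (fun n => g (u (φ n))) atTop (nhds (g z)) := by
  have : Nonempty (StrongDual ℝ E) := ⟨0⟩
  set g : ℕ → StrongDual ℝ E := denseSeq (StrongDual ℝ E) with hgdef
  have hg : DenseRange g := denseRange_denseSeq _
  set K : Set (ℕ → ℝ) := Set.univ.pi fun i => Set.Icc (-(‖g i‖ * C)) (‖g i‖ * C) with hK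
  have hKc : IsCompact K := isCompact_univ_pi fun i => isCompact_Icc
  have hmem : ∀ n, (fun i => g i (u n)) ∈ K := by
    intro n
    rw [Set.mem_univ_pi]
    intro i
    have h1 : ‖g i (u n)‖ ≤ ‖g i‖ * C := by
      calc ‖g i (u n)‖ ≤ ‖g i‖ * ‖u n‖ := (g i).le_opNorm _
      _ ≤ ‖g i‖ * C := mul_le_mul_of_nonneg_left (hu n) (norm_nonneg _)
    rw [Real.norm_eq_abs, abs_le] at h1
    exact ⟨h1.1, h1.2⟩
  obtain ⟨a, -, φ, hφ, ha⟩ := hKc.tendsto_subseq hmem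
  rw [tendsto_pi_nhds] at ha
  have hconv : ∀ h : StrongDual ℝ E, ∃ L, Tendsto (fun n => h (u (φ n))) atTop (nhds L) := by
    intro h
    refine cauchySeq_tendsto_of_complete ?_
    rw [Metric.cauchySeq_iff]
    intro ε hε
    obtain ⟨i, hi⟩ := Metric.denseRange_iff.1 hg h (ε / (4 * (C + 1))) (by positivity)
    rw [dist_comm, dist_eq_norm] at hi
    have hcau := (ha i).cauchySeq
    rw [Metric.cauchySeq_iff] at hcau
    obtain ⟨N, hN⟩ := hcau (ε / 4) (by positivity)
    refine ⟨N, fun m hm n hn => ?_⟩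
    have key : ∀ k, |h (u (φ k)) - g i (u (φ k))| ≤ ε / 4 := by
      intro k
      have h1 : |(h - g i) (u (φ k))| ≤ ‖h - g i‖ * ‖u (φ k)‖ := (h - g i).le_opNorm _
      have h2 : ‖h - g i‖ * ‖u (φ k)‖ ≤ (ε / (4 * (C + 1))) * C := by
        apply mul_le_mul (le_of_lt (by rwa [norm_sub_rev] at hi)) (hu _) (norm_nonneg _)
        positivity
      have h3 : (ε / (4 * (C + 1))) * C ≤ ε / 4 := by
        rw [div_mul_eq_mul_div, div_le_div_iff₀ (by positivity) (by norm_num)]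
        ring_nf
        nlinarith
      have h4 : (h - g i) (u (φ k)) = h (u (φ k)) - g i (u (φ k)) := rfl
      rw [h4] at h1
      linarith
    have hmn := hN m hm n hn
    rw [Real.dist_eq] at hmn ⊢
    have k1 := key m
    have k2 := key n
    have : h (u (φ m)) - h (u (φ n)) =
        (h (u (φ m)) - g i (u (φ m))) + (g i (u (φ m)) - g i (u (φ n)))
          + (g i (u (φ n)) - h (u (φ n))) := by ring
    rw [this]
    calc |_ + _ + _| ≤ |(h (u (φ m)) - g i (u (φ m))) + (g i (u (φ m)) - g i (u (φ n)))|
        + |g i (u (φ n)) - h (u (φ n))| := abs_add_le _ _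
    _ ≤ |h (u (φ m)) - g i (u (φ m))| + |g i (u (φ m)) - g i (u (φ n))|
        + |g i (u (φ n)) - h (u (φ n))| := by
          have := abs_add_le (h (u (φ m)) - g i (u (φ m))) (g i (u (φ m)) - g i (u (φ n)))
          linarith
    _ < ε := by
          have k3 : |g i (u (φ n)) - h (u (φ n))| ≤ ε / 4 := by rw [abs_sub_comm]; exact k2
          have h5 : |g i (u (φ m)) - g i (u (φ n))| < ε / 4 := hmn
          linarith
  choose L hL using hconv
  have hTadd : ∀ h₁ h₂ : StrongDual ℝ E, L (h₁ + h₂) = L h₁ + L h₂ := by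
    intro h₁ h₂
    refine tendsto_nhds_unique (hL (h₁ + h₂)) ?_
    have := (hL h₁).add (hL h₂)
    simpa using this
  have hTsmul : ∀ (c : ℝ) (h : StrongDual ℝ E), L (c • h) = c * L h := by
    intro c h
    refine tendsto_nhds_unique (hL (c • h)) ?_
    have := (hL h).const_mul c
    simpa [mul_comm] using this
  have hTbdd : ∀ h : StrongDual ℝ E, ‖L h‖ ≤ C * ‖h‖ := by
    intro h
    have h1 : ∀ n, ‖h (u (φ n))‖ ≤ C * ‖h‖ := by
      intro n
      calc ‖h (u (φ n))‖ ≤ ‖h‖ * ‖u (φ n)‖ := h.le_opNorm _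
      _ ≤ ‖h‖ * C := mul_le_mul_of_nonneg_left (hu _) (norm_nonneg _)
      _ = C * ‖h‖ := mul_comm _ _
    exact le_of_tendsto (hL h).norm (Eventually.of_forall h1)
  set Tlin : StrongDual ℝ E →ₗ[ℝ] ℝ :=
    { toFun := L
      map_add' := hTadd
      map_smul' := fun c h => by simpa using hTsmul c h } with hTlin
  set T : StrongDual ℝ (StrongDual ℝ E) := Tlin.mkContinuous C (fun h => hTbdd h) with hT
  obtain ⟨z, hz⟩ := hrefl T
  refine ⟨φ, hφ, z, fun h => ?_⟩
  have h1 : h z = L h := by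
    have := congrArg (fun F => F h) hz
    exact this.trans rfl
  rw [h1]
  exact hL h

/-- Weak sequential compactness of bounded sequences in a reflexive space. -/
lemma exists_weak_subseq (hrefl : ReflexiveSpace X) (u : ℕ → X) (C : ℝ) (hC : 0 ≤ C)
    (hu : ∀ n, ‖u n‖ ≤ C) :
    ∃ φ : ℕ → ℕ, StrictMono φ ∧ ∃ z : X, WeakTendsto (fun n => u (φ n)) z := by
  set Y : Submodule ℝ X := (Submodule.span ℝ (Set.range u)).topologicalClosure with hYdef
  have hYclosed : IsClosed (Y : Set X) := Submodule.isClosed_topologicalClosure _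
  have hYrefl : ReflexiveSpace Y := reflexiveSpace_subspace hrefl hYclosed
  have hYsep : SeparableSpace Y := by
    refine IsSeparable.separableSpace ?_
    have h1 : IsSeparable (Set.range u) := (Set.countable_range u).isSeparable
    have h2 := h1.span (R := ℝ)
    rw [hYdef]
    rw [show ((Submodule.span ℝ (Set.range u)).topologicalClosure : Set X)
        = closure ((Submodule.span ℝ (Set.range u) : Submodule ℝ X) : Set X) from rfl]
    exact h2.closure
  have hYYsep : SeparableSpace (StrongDual ℝ (StrongDual ℝ Y)) := by
    have hJcont : Continuous (NormedSpace.inclusionInDoubleDual ℝ Y) :=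
      (NormedSpace.inclusionInDoubleDual ℝ Y).continuous
    have hJdr : DenseRange (NormedSpace.inclusionInDoubleDual ℝ Y) :=
      hYrefl.denseRange
    exact hJdr.separableSpace hJcont
  have hYdsep : SeparableSpace (StrongDual ℝ Y) :=
    separableSpace_of_dual_separable (Z := StrongDual ℝ Y)
  have humem : ∀ n, u n ∈ Y :=
    fun n => (Submodule.le_topologicalClosure _) (Submodule.subset_span ⟨n, rfl⟩)
  set v : ℕ → Y := fun n => ⟨u n, humem n⟩ with hv
  have hvC : ∀ n, ‖v n‖ ≤ C := fun n => hu n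
  obtain ⟨φ, hφ, z, hz⟩ := exists_weak_subseq_aux hYrefl v C hC hvC
  refine ⟨φ, hφ, z, fun f => ?_⟩
  have := hz (f.comp Y.subtypeL)
  simpa using this
end Aux3

section Aux4

variable {X : Type*} [PseudoMetricSpace X]

lemma setDist_le {A B : Set X} {a b : X} (ha : a ∈ A) (hb : b ∈ B) :
    setDist A B ≤ dist a b := by
  refine csInf_le ⟨0, fun r hr => ?_⟩ (Set.mem_image2_of_mem ha hb)
  obtain ⟨u, -, v, -, rfl⟩ := hr
  exact dist_nonneg

lemma setDist_nonneg {A B : Set X} (hA : A.Nonempty) (hB : B.Nonempty) :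
    0 ≤ setDist A B := by
  refine le_csInf ⟨_, Set.mem_image2_of_mem hA.some_mem hB.some_mem⟩ ?_
  rintro r ⟨u, -, v, -, rfl⟩
  exact dist_nonneg

lemma le_dist_of_closure {d : ℝ} {A B : Set X} (h : ∀ a ∈ A, ∀ b ∈ B, d ≤ dist a b)
    {a b : X} (ha : a ∈ closure A) (hb : b ∈ closure B) : d ≤ dist a b := by
  refine le_of_forall_pos_le_add (fun ε hε => ?_)
  obtain ⟨a', ha', hda⟩ := Metric.mem_closure_iff.1 ha (ε / 2) (by positivity)
  obtain ⟨b', hb', hdb⟩ := Metric.mem_closure_iff.1 hb (ε / 2) (by positivity)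
  have h1 := h a' ha' b' hb'
  have h2 : dist a' b' ≤ dist a' a + dist a b + dist b b' := dist_triangle4 a' a b b'
  rw [dist_comm a' a, dist_comm b b'] at h2
  have h3 : dist b' b = dist b b' := dist_comm _ _
  linarith

end Aux4

section Aux5

variable {X : Type*} [NormedAddCommGroup X] [NormedSpace ℝ X]

/-- Strict convexity: two vectors of norm `d` whose sum has norm at least `2d` coincide. -/
lemma eq_of_norm_eq_of_norm_add_ge [StrictConvexSpace ℝ X] {a b : X} {d : ℝ} (hd : 0 < d)
    (ha : ‖a‖ = d) (hb : ‖b‖ = d) (hab : 2 * d ≤ ‖a + b‖) : a = b := by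
  by_contra hne
  by_cases hray : SameRay ℝ a b
  · have := hray.norm_smul_eq
    rw [ha, hb] at this
    exact hne (smul_right_injective X hd.ne' this.symm)
  · have := norm_add_lt_of_not_sameRay hray
    rw [ha, hb] at this
    linarith

/-- The `UKK` upgrade: a weakly convergent minimizing-type sequence converges in norm. -/
lemma tendsto_of_UKK (hUKK : UKKProperty X) {d : ℝ} (hd : 0 < d) {v : ℕ → X} {z : X}
    (y : ℕ → X) (hw : WeakTendsto v z)
    (hclose : ∀ k : ℕ, ∀ᶠ n in atTop, ‖v n - y k‖ ≤ d + 1 / ((k : ℝ) + 1))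
    (hzy : ∀ k, d ≤ ‖z - y k‖) :
    Tendsto v atTop (nhds z) := by
  by_contra hcon
  rw [Metric.tendsto_atTop] at hcon
  push_neg at hcon
  obtain ⟨ε, hε, hfreq⟩ := hcon
  have hfreq' : ∃ᶠ n in atTop, ε ≤ dist (v n) z := by
    rw [Filter.frequently_atTop]
    intro N
    obtain ⟨n, hn, hn2⟩ := hfreq N
    exact ⟨n, hn, hn2⟩
  obtain ⟨ps, hps, hpse⟩ := Filter.extraction_of_frequently_atTop hfreq'
  have hε' : (0 : ℝ) < ε / (d + 2) := by positivity
  obtain ⟨η, hη, hUKKe⟩ := hUKK (ε / (d + 2)) hε'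
  -- pick k with (1 - η) * (d + 1/(k+1)) < d
  obtain ⟨k, hk⟩ : ∃ k : ℕ, (1 - η) * (d + 1 / ((k : ℝ) + 1)) < d := by
    have hlim : Tendsto (fun k : ℕ => (1 - η) * (d + 1 / ((k : ℝ) + 1))) atTop
        (nhds ((1 - η) * (d + 0))) :=
      (tendsto_const_nhds.mul (tendsto_const_nhds.add tendsto_one_div_add_atTop_nhds_zero_nat))
    have hlt : (1 - η) * (d + 0) < d := by nlinarith
    exact (hlim.eventually_lt_const hlt).exists
  set c : ℝ := d + 1 / ((k : ℝ) + 1) with hc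
  have hcpos : 0 < c := by positivity
  -- eventually the subsequence is within c of y k
  have hev : ∀ᶠ n in atTop, ‖v (ps n) - y k‖ ≤ c := hps.tendsto_atTop.eventually (hclose k)
  obtain ⟨N, hN⟩ := Filter.eventually_atTop.1 hev
  set w : ℕ → X := fun n => c⁻¹ • (v (ps (n + N)) - y k) with hwdef
  set z' : X := c⁻¹ • (z - y k) with hz'def
  have h1 : ∀ n, ‖w n‖ ≤ 1 := by
    intro n
    rw [hwdef]
    simp only [norm_smul, norm_inv, Real.norm_eq_abs, abs_of_pos hcpos]
    rw [inv_mul_le_iff₀ hcpos, mul_one]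
    exact hN (n + N) (Nat.le_add_left N n)
  have h2 : ∀ n, ε / (d + 2) ≤ ‖w n - z'‖ := by
    intro n
    have he : w n - z' = c⁻¹ • (v (ps (n + N)) - z) := by
      rw [hwdef, hz'def, ← smul_sub]
      congr 1
      abel
    rw [he, norm_smul, norm_inv, Real.norm_eq_abs, abs_of_pos hcpos]
    have hlow : ε ≤ ‖v (ps (n + N)) - z‖ := by
      rw [← dist_eq_norm]
      exact hpse (n + N)
    have hcle : c ≤ d + 2 := by
      rw [hc]
      have : 1 / ((k : ℝ) + 1) ≤ 1 := by
        rw [div_le_one (by positivity)]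
        have : (0:ℝ) ≤ (k:ℝ) := Nat.cast_nonneg k
        linarith
      linarith
    calc ε / (d + 2) ≤ ε / c := by
          apply div_le_div_of_nonneg_left hε.le hcpos hcle
    _ = c⁻¹ * ε := by rw [div_eq_inv_mul]
    _ ≤ c⁻¹ * ‖v (ps (n + N)) - z‖ := by
          exact mul_le_mul_of_nonneg_left hlow (by positivity)
  have h3 : WeakTendsto w z' := by
    have s1 : WeakTendsto (fun n => v (ps n)) z := hw.comp_strictMono hps
    have s2 : WeakTendsto (fun n => v (ps (n + N))) z := s1.shift N
    have s3 : WeakTendsto (fun n => v (ps (n + N)) - y k) (z - y k) := s2.sub_const _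
    exact s3.smul c⁻¹
  have hfin := hUKKe w z' h1 h2 h3
  have h4 : ‖z'‖ = c⁻¹ * ‖z - y k‖ := by
    rw [hz'def, norm_smul, norm_inv, Real.norm_eq_abs, abs_of_pos hcpos]
  rw [h4, inv_mul_le_iff₀ hcpos] at hfin
  have h5 : ‖z - y k‖ ≤ (1 - η) * c := by rw [mul_comm]; exact hfin
  have h6 := hzy k
  linarith

end Aux5

theorem prop_WUC_of_UKK {X : Type*} [NormedAddCommGroup X] [NormedSpace ℝ X]
    [CompleteSpace X] [StrictConvexSpace ℝ X]
    (hrefl : ReflexiveSpace X) (hUKK : UKKProperty X)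
    (A B : Set X) (hA : A.Nonempty) (hB : B.Nonempty)
    (hAconv : Convex ℝ A) (hBconv : Convex ℝ B) :
    PropWUC A B := by
  intro x hxA hxH
  set d := setDist A B with hd
  have hd0 : 0 ≤ d := setDist_nonneg hA hB
  have hAB : ∀ a ∈ A, ∀ b ∈ B, d ≤ dist a b := fun a ha b hb => setDist_le ha hb
  rcases eq_or_lt_of_le hd0 with hzero | hpos
  · -- distance zero: the sequence is Cauchy
    have hcauchy : CauchySeq x := by
      rw [Metric.cauchySeq_iff]
      intro ε hε
      obtain ⟨y, hyB, m₀, hm⟩ := hxH (ε / 3) (by positivity)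
      refine ⟨m₀, fun m hm1 n hn1 => ?_⟩
      have h1 := hm m hm1
      have h2 := hm n hn1
      rw [← hzero] at h1 h2
      calc dist (x m) (x n) ≤ dist (x m) y + dist y (x n) := dist_triangle _ _ _
      _ = dist (x m) y + dist (x n) y := by rw [dist_comm y]
      _ ≤ (0 + ε / 3) + (0 + ε / 3) := add_le_add h1 h2
      _ < ε := by linarith
    exact cauchySeq_tendsto_of_complete hcauchy
  · -- main case: positive distance
    choose y hyB m₀ hm using fun k : ℕ => hxH (1 / ((k : ℝ) + 1)) (by positivity)
    -- a uniform bound on the sequence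
    obtain ⟨R, hR0, hR⟩ : ∃ R, 0 ≤ R ∧ ∀ m, ‖x m‖ ≤ R := by
      refine ⟨max (((Finset.range (m₀ 0 + 1)).sup fun m => ‖x m‖₊ : NNReal) : ℝ)
        (‖y 0‖ + (d + 1)), le_max_of_le_left (by positivity), fun m => ?_⟩
      rcases le_or_gt m (m₀ 0) with h | h
      · refine le_max_of_le_left ?_
        have := Finset.le_sup (f := fun m => ‖x m‖₊)
          (Finset.mem_range_succ_iff.2 h)
        exact_mod_cast this
      · refine le_max_of_le_right ?_
        have h1 := hm 0 m h.le
        rw [dist_eq_norm] at h1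
        have h2 : ‖x m‖ ≤ ‖x m - y 0‖ + ‖y 0‖ := by
          have h := norm_add_le (x m - y 0) (y 0)
          simpa using h
        have h3 : (1 : ℝ) / ((0 : ℕ) + 1) = 1 := by norm_num
        rw [h3] at h1
        linarith
    -- the y k are bounded
    have hyBdd : ∀ k, ‖y k‖ ≤ R + d + 1 := by
      intro k
      have h1 := hm k (m₀ k) le_rfl
      rw [dist_eq_norm] at h1
      have h2 : ‖y k‖ ≤ ‖x (m₀ k)‖ + ‖x (m₀ k) - y k‖ := by
        have h := norm_sub_le (x (m₀ k)) (x (m₀ k) - y k)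
        have he : x (m₀ k) - (x (m₀ k) - y k) = y k := by abel
        rwa [he] at h
      have h5 : (1 : ℝ) / ((k : ℝ) + 1) ≤ 1 := by
        rw [div_le_one (by positivity)]
        have : (0:ℝ) ≤ (k:ℝ) := Nat.cast_nonneg k
        linarith
      have h6 := hR (m₀ k)
      linarith
    -- weak limit of (a subsequence of) the y k
    obtain ⟨qs, hqs, ystar, hystar⟩ :=
      exists_weak_subseq hrefl y (R + d + 1) (by linarith) hyBdd
    have hystarB : ystar ∈ closure B :=
      WeakTendsto.mem_closure hystar hBconv (fun n => hyB _)
    -- the key procedure: from any subsequence extract a norm-convergent one with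
    -- limit in closure A at distance exactly d from ystar
    have KEY : ∀ ns : ℕ → ℕ, Tendsto ns atTop atTop →
        ∃ ms : ℕ → ℕ, ∃ z : X, Tendsto (fun n => x (ns (ms n))) atTop (nhds z) ∧
          z ∈ closure A ∧ ‖z - ystar‖ = d := by
      intro ns hns
      obtain ⟨ms, hmsmono, z, hwz⟩ :=
        exists_weak_subseq hrefl (fun n => x (ns n)) R hR0 (fun n => hR _)
      have hnsms : Tendsto (fun n => ns (ms n)) atTop atTop :=
        hns.comp hmsmono.tendsto_atTop
      have hmemA : z ∈ closure A := hwz.mem_closure hAconv (fun n => hxA _)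
      have hclose : ∀ k : ℕ, ∀ᶠ n in atTop,
          ‖x (ns (ms n)) - y k‖ ≤ d + 1 / ((k : ℝ) + 1) := by
        intro k
        filter_upwards [hnsms.eventually_ge_atTop (m₀ k)] with n hn
        have := hm k _ hn
        rwa [dist_eq_norm] at this
      have hzy : ∀ k, d ≤ ‖z - y k‖ := by
        intro k
        rw [← dist_eq_norm]
        exact le_dist_of_closure hAB hmemA (subset_closure (hyB k))
      have hzyk : ∀ k, ‖z - y k‖ ≤ d + 1 / ((k : ℝ) + 1) := by
        intro k
        exact (hwz.sub_const (y k)).norm_le (hclose k)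
      have hnorm : Tendsto (fun n => x (ns (ms n))) atTop (nhds z) :=
        tendsto_of_UKK hUKK hpos y hwz hclose hzy
      have hle : ‖z - ystar‖ ≤ d := by
        refine le_of_forall_pos_le_add (fun ε hε => ?_)
        have hwy : WeakTendsto (fun j => z - y (qs j)) (z - ystar) :=
          hystar.const_sub z
        refine hwy.norm_le ?_
        have hev : ∀ᶠ j in atTop, 1 / ((qs j : ℝ) + 1) ≤ ε := by
          have h1 : Tendsto (fun j => 1 / ((qs j : ℝ) + 1)) atTop (nhds 0) :=
            tendsto_one_div_add_atTop_nhds_zero_nat.comp hqs.tendsto_atTop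
          exact h1.eventually_le_const hε
        filter_upwards [hev] with j hj
        have := hzyk (qs j)
        linarith
      have hge : d ≤ ‖z - ystar‖ := by
        rw [← dist_eq_norm]
        exact le_dist_of_closure hAB hmemA hystarB
      exact ⟨ms, z, hnorm, hmemA, le_antisymm hle hge⟩
    obtain ⟨ms₀, z₀, hz₀, hz₀A, hz₀y⟩ := KEY id tendsto_id
    refine ⟨z₀, Filter.tendsto_of_subseq_tendsto (fun ns hns => ?_)⟩
    obtain ⟨ms, z, hzt, hzA, hzy⟩ := KEY ns hns
    have hzz : z = z₀ := by
      have hmidA : (2⁻¹ : ℝ) • z + (2⁻¹ : ℝ) • z₀ ∈ closure A :=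
        hAconv.closure hzA hz₀A (by norm_num) (by norm_num) (by norm_num)
      have hmid : d ≤ ‖((2⁻¹ : ℝ) • z + (2⁻¹ : ℝ) • z₀) - ystar‖ := by
        rw [← dist_eq_norm]
        exact le_dist_of_closure hAB hmidA hystarB
      have hsum : 2 * d ≤ ‖(z - ystar) + (z₀ - ystar)‖ := by
        have he : ((2⁻¹ : ℝ) • z + (2⁻¹ : ℝ) • z₀) - ystar
            = (2⁻¹ : ℝ) • ((z - ystar) + (z₀ - ystar)) := by
          module
        rw [he, norm_smul] at hmid
        simp only [norm_inv, Real.norm_ofNat] at hmid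
        nlinarith [hmid]
      have := eq_of_norm_eq_of_norm_add_ge hpos hzy hz₀y hsum
      have h2 : z - ystar = z₀ - ystar := this
      exact sub_left_inj.1 h2
    rw [hzz] at hzt
    exact ⟨ms, hzt⟩
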